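/- Fix a large constant C1 > 0 and let Ω be the event that there exist indices i, j with |x_iᵀx_j − δ_{ij}| > √(C1·log p1/p1) or |y_iᵀy_j − δ_{ij}| > √(C1·log p2/p2). Conditional on the complementary event Ω^c, there exists a constant C > 0 such that for n sufficiently large: ‖(n^{-1}D_x)^{-1} − f(2)^{-1}·I_n‖ ≤ C·log n/√n and ‖(n^{-1}D_y)^{-1} − f(2)^{-1}·I_n‖ ≤ C·log n/√n, where ‖·‖ is the operator norm. -/

import Mathlib

open MeasureTheory ProbabilityTheory Filter Set Matrix
open scoped ENNReal NNReal Topology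

noncomputable section

namespace SensorFusion

instance {m n α : Type*} [MeasurableSpace α] : MeasurableSpace (Matrix m n α) :=
  inferInstanceAs (MeasurableSpace (m → n → α))

/-- The Marchenko–Pastur law with aspect ratio `c` and scale `σ2`. -/
def mpLaw (c σ2 : ℝ) : Measure ℝ :=
  (ENNReal.ofReal (1 - c⁻¹)) • Measure.dirac 0 +
    MeasureTheory.volume.withDensity fun x =>
      ENNReal.ofReal
        (if (1 - σ2 * Real.sqrt c) ^ 2 ≤ x ∧ x ≤ (1 + σ2 * Real.sqrt c) ^ 2 then
          Real.sqrt (((1 + σ2 * Real.sqrt c) ^ 2 - x) * (x - (1 - σ2 * Real.sqrt c) ^ 2)) /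
            (2 * Real.pi * σ2 * c * x)
        else 0)

/-- Shift a measure on `ℝ` by `c` (pushforward under `x ↦ x + c`), so that `T_c μ (I) = μ (I - c)`. -/
def shiftM (c : ℝ) (μ : Measure ℝ) : Measure ℝ := μ.map fun x => x + c

/-- Stieltjes transform of a measure on `ℝ`. -/
def stP (μ : Measure ℝ) (z : ℂ) : ℂ := ∫ x : ℝ, ((x : ℂ) - z)⁻¹ ∂μ

/-- Stieltjes transform of an `n × n` real matrix: `m_H(z) = n⁻¹ tr((H - z)⁻¹)`. -/
def stM {n : ℕ} (M : Matrix (Fin n) (Fin n) ℝ) (z : ℂ) : ℂ :=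
  (n : ℂ)⁻¹ * ((M.map (fun x : ℝ => (x : ℂ)) - z • (1 : Matrix (Fin n) (Fin n) ℂ))⁻¹).trace

/-- The M-transform of a measure: `M_μ(z) = 1 - (∫ x/(x - z) dμ(x))⁻¹`. -/
def mT (μ : Measure ℝ) (z : ℂ) : ℂ := 1 - (∫ x : ℝ, (x : ℂ) / ((x : ℂ) - z) ∂μ)⁻¹

/-- `Om`, `On` are the multiplicative subordination functions of the pair `(μ, ν)`:
analytic self-maps of the upper half plane, increasing the argument, with
`M_μ(On z) = M_ν(Om z)` and `Om z * On z = z * M_μ(On z)` (the common value being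
the M-transform of the free multiplicative convolution `μ ⊠ ν`). -/
def IsMulSubord (μ ν : Measure ℝ) (Om On : ℂ → ℂ) : Prop :=
  AnalyticOnNhd ℂ Om {z : ℂ | 0 < z.im} ∧ AnalyticOnNhd ℂ On {z : ℂ | 0 < z.im} ∧
  ∀ z : ℂ, 0 < z.im →
    0 < (Om z).im ∧ 0 < (On z).im ∧ z.arg ≤ (Om z).arg ∧ z.arg ≤ (On z).arg ∧
    mT μ (On z) = mT ν (Om z) ∧ Om z * On z = z * mT μ (On z)

/-- `ρ = μ ⊠ ν` is the free multiplicative convolution of `μ` and `ν`: the probability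
measure whose M-transform is the common value `M_μ(Ω_ν(z)) = M_ν(Ω_μ(z))` of a
subordination pair for `(μ, ν)`. -/
def IsFreeMulConv (μ ν ρ : Measure ℝ) : Prop :=
  IsProbabilityMeasure ρ ∧
  ∃ Om On : ℂ → ℂ, IsMulSubord μ ν Om On ∧ ∀ z : ℂ, 0 < z.im → mT ρ z = mT μ (On z)

/-- `g j` is the `j`-th typical location of `μ` at sample size `n`:
`∫_{g j}^∞ μ(dx) = (j - 1/2)/n` for `1 ≤ j ≤ n`. -/
def IsTypLoc (μ : Measure ℝ) (n : ℕ) (g : ℕ → ℝ) : Prop :=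
  ∀ j : ℕ, 1 ≤ j → j ≤ n → (μ (Set.Ici (g j))).toReal = ((j : ℝ) - 1 / 2) / n

/-- `lam` enumerates the (real) eigenvalues of `M` (with multiplicity, as roots of the
characteristic polynomial) in decreasing order; `lam i` is the `(i+1)`-st largest eigenvalue. -/
def IsEigsDesc {n : ℕ} (M : Matrix (Fin n) (Fin n) ℝ) (lam : Fin n → ℝ) : Prop :=
  (∀ i j : Fin n, i ≤ j → lam j ≤ lam i) ∧
  Multiset.map lam Finset.univ.val = M.charpoly.roots

/-- `lam` enumerates the complex eigenvalues of `M` (with multiplicity) ordered by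
decreasing real part. -/
def IsEigsDescRe {n : ℕ} (M : Matrix (Fin n) (Fin n) ℂ) (lam : Fin n → ℂ) : Prop :=
  (∀ i j : Fin n, i ≤ j → (lam j).re ≤ (lam i).re) ∧
  Multiset.map lam Finset.univ.val = M.charpoly.roots

/-- Empirical spectral distribution `n⁻¹ ∑ δ_{d i}`. -/
def esdFun {n : ℕ} (d : Fin n → ℝ) : Measure ℝ :=
  (n : ℝ≥0∞)⁻¹ • ∑ i : Fin n, Measure.dirac (d i)

/-- Operator (spectral) norm of a real `n × n` matrix. -/
def opNorm {n : ℕ} (M : Matrix (Fin n) (Fin n) ℝ) : ℝ :=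
  ‖LinearMap.toContinuousLinearMap (Matrix.toEuclideanLin M)‖

/-- The right-most endpoint of the support of a measure on `ℝ`. -/
def rightEdge (μ : Measure ℝ) : ℝ := sInf {x : ℝ | μ (Set.Ioi x) = 0}

/-- Topological support of a measure on `ℝ`. -/
def msupport (μ : Measure ℝ) : Set ℝ := {x : ℝ | ∀ ε > 0, μ (Set.Ioo (x - ε) (x + ε)) ≠ 0}

/-- The Lévy distance between two measures on `ℝ`. -/
def levyDist (μ ν : Measure ℝ) : ℝ :=
  sInf {ε : ℝ | 0 < ε ∧ ∀ x : ℝ,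
    (μ (Set.Iic (x - ε))).toReal - ε ≤ (ν (Set.Iic x)).toReal ∧
    (ν (Set.Iic (x - ε))).toReal - ε ≤ (μ (Set.Iic x)).toReal}

/-- The kernel affinity matrix `W(i,j) = f(‖x_i - x_j‖²)`. -/
def affinity {n p : ℕ} (f : ℝ → ℝ) (x : Fin n → Fin p → ℝ) : Matrix (Fin n) (Fin n) ℝ :=
  Matrix.of fun i j => f (∑ k, (x i k - x j k) ^ 2)

/-- `ψ(i) = ‖x_i‖² - 1`. -/
def psiVec {n p : ℕ} (x : Fin n → Fin p → ℝ) (i : Fin n) : ℝ := (∑ k, x i k ^ 2) - 1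

/-- `Sh₀ = f(2) 𝟙𝟙ᵀ`. -/
def sh0 (n : ℕ) (f : ℝ → ℝ) : Matrix (Fin n) (Fin n) ℝ := Matrix.of fun _ _ => f 2

/-- `Sh₁ = f'(2)(𝟙ψᵀ + ψ𝟙ᵀ)`. -/
def sh1 {n p : ℕ} (f : ℝ → ℝ) (x : Fin n → Fin p → ℝ) : Matrix (Fin n) (Fin n) ℝ :=
  Matrix.of fun i j => deriv f 2 * (psiVec x i + psiVec x j)

/-- `Sh₂ = (f''(2)/2)(𝟙(ψ∘ψ)ᵀ + (ψ∘ψ)𝟙ᵀ + 2ψψᵀ)`. -/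
def sh2 {n p : ℕ} (f : ℝ → ℝ) (x : Fin n → Fin p → ℝ) : Matrix (Fin n) (Fin n) ℝ :=
  Matrix.of fun i j =>
    deriv (deriv f) 2 / 2 * (psiVec x i ^ 2 + psiVec x j ^ 2 + 2 * psiVec x i * psiVec x j)

/-- `W̃ = W - Sh₀ - Sh₁ - Sh₂`. -/
def wTilde {n p : ℕ} (f : ℝ → ℝ) (x : Fin n → Fin p → ℝ) : Matrix (Fin n) (Fin n) ℝ :=
  affinity f x - sh0 n f - sh1 f x - sh2 f x

/-- The Gram matrix `XᵀX` with `(i,j)` entry `x_iᵀ x_j`. -/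
def gram {n p : ℕ} (x : Fin n → Fin p → ℝ) : Matrix (Fin n) (Fin n) ℝ :=
  Matrix.of fun i j => ∑ k, x i k * x j k

/-- `ς = f(0) + 2f'(2) - f(2)`. -/
def varsigma (f : ℝ → ℝ) : ℝ := f 0 + 2 * deriv f 2 - f 2

/-- `K̆ = -2f'(2)·XᵀX + ς·I`. -/
def kBreve {n p : ℕ} (f : ℝ → ℝ) (x : Fin n → Fin p → ℝ) : Matrix (Fin n) (Fin n) ℝ :=
  (-(2 * deriv f 2)) • gram x + varsigma f • (1 : Matrix (Fin n) (Fin n) ℝ)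

/-- `K(i,j) = f(2) - 2f'(2)·x_iᵀx_j` off the diagonal and `K(i,i) = f(0)`. -/
def kMat {n p : ℕ} (f : ℝ → ℝ) (x : Fin n → Fin p → ℝ) : Matrix (Fin n) (Fin n) ℝ :=
  Matrix.of fun i j => if i = j then f 0 else f 2 - 2 * deriv f 2 * ∑ k, x i k * x j k

/-- The row-stochastic normalization `A = D⁻¹ W` where `D` is the degree matrix of `W`. -/
def rowSt {n : ℕ} (W : Matrix (Fin n) (Fin n) ℝ) : Matrix (Fin n) (Fin n) ℝ :=
  (Matrix.diagonal fun i => (∑ j, W i j)⁻¹) * W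

/-- `ν = T_ς μ_{c, -2f'(2)}`: shifted Marchenko–Pastur law. -/
def nuMeasure (f : ℝ → ℝ) (c : ℝ) : Measure ℝ := shiftM (varsigma f) (mpLaw c (-(2 * deriv f 2)))

/-- The law of `n` i.i.d. samples from `N(0, p⁻¹ I_p)`. -/
def gaussPi (n p : ℕ) : Measure (Fin n → Fin p → ℝ) :=
  Measure.pi fun _ => Measure.pi fun _ => gaussianReal 0 (p : ℝ≥0)⁻¹

/-- Membership of `z = E + iη` in the spectral parameter set `S(α, τ)`. -/
def inSpecSet (n : ℕ) (α τ E η : ℝ) : Prop :=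
  τ ≤ E ∧ E ≤ τ⁻¹ ∧ (n : ℝ) ^ (-α + τ) ≤ η ∧ η ≤ τ⁻¹

/-- `z = E + iη`. -/
def cz (E η : ℝ) : ℂ := (E : ℂ) + (η : ℂ) * Complex.I

/-- Diagonal entries of `Σ`: `γ_ν(i)` for `i ≤ min n p` and `ς` otherwise. -/
def sigmaD (n p : ℕ) (ς : ℝ) (g : ℕ → ℝ) (i : Fin n) : ℝ :=
  if (i : ℕ) + 1 ≤ min n p then g ((i : ℕ) + 1) else ς

/-- Assumption on an absolutely continuous probability measure supported on the single
interval `[a, b] ⊂ (0, ∞)`, with density positive in the interior and a power-law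
behaviour at the upper edge. -/
def EdgeRegular (μ : Measure ℝ) (a b : ℝ) : Prop :=
  IsProbabilityMeasure μ ∧ 0 < a ∧ a < b ∧
  ∃ ρ : ℝ → ℝ,
    μ = MeasureTheory.volume.withDensity (fun x => ENNReal.ofReal (ρ x)) ∧
    (∀ x, x < a → ρ x = 0) ∧ (∀ x, b < x → ρ x = 0) ∧
    (∀ x, a < x → x < b → 0 < ρ x) ∧
    ∃ C t δ : ℝ, 0 < C ∧ C ≤ 1 ∧ -1 < t ∧ t < 1 ∧ 0 < δ ∧
      ∀ x, b - δ ≤ x → x < b → C ≤ ρ x / (b - x) ^ t ∧ ρ x / (b - x) ^ t ≤ C⁻¹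


section Helpers

lemma opNorm_diagonal_le' {n : ℕ} (w : Fin n → ℝ) {r : ℝ} (hr : 0 ≤ r)
    (h : ∀ i, |w i| ≤ r) : opNorm (Matrix.diagonal w) ≤ r := by
  refine ContinuousLinearMap.opNorm_le_bound _ hr fun x => ?_
  have hx : ∀ (y : EuclideanSpace ℝ (Fin n)), ‖y‖ = Real.sqrt (∑ i, ‖y i‖ ^ 2) :=
    fun y => EuclideanSpace.norm_eq y
  rw [LinearMap.coe_toContinuousLinearMap']
  rw [hx, hx]
  have happ : ∀ i, (Matrix.toEuclideanLin (Matrix.diagonal w) x) i = w i * x i := by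
    intro i
    simp [Matrix.toEuclideanLin_apply, Matrix.mulVec_diagonal]
  calc Real.sqrt (∑ i, ‖(Matrix.toEuclideanLin (Matrix.diagonal w) x) i‖ ^ 2)
      ≤ Real.sqrt (∑ i, r ^ 2 * ‖x i‖ ^ 2) := by
        apply Real.sqrt_le_sqrt
        apply Finset.sum_le_sum
        intro i _
        rw [happ i]
        rw [norm_mul]
        rw [mul_pow]
        apply mul_le_mul_of_nonneg_right _ (sq_nonneg _)
        calc ‖w i‖ ^ 2 = |w i| ^ 2 := by rw [Real.norm_eq_abs]
          _ ≤ r ^ 2 := by apply pow_le_pow_left₀ (abs_nonneg _) (h i)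
    _ = r * Real.sqrt (∑ i, ‖x i‖ ^ 2) := by
        rw [← Finset.mul_sum, Real.sqrt_mul (sq_nonneg r), Real.sqrt_sq hr]

lemma diag_sub_smul' {n : ℕ} (v : Fin n → ℝ) (c : ℝ) :
    Matrix.diagonal v - c • (1 : Matrix (Fin n) (Fin n) ℝ)
      = Matrix.diagonal (fun i => v i - c) := by
  ext i j
  by_cases hij : i = j <;> simp [Matrix.diagonal, Matrix.one_apply, hij]

lemma key_bound {n p : ℕ} (f : ℝ → ℝ) {L B ε : ℝ}
    (hL0 : 0 ≤ L)
    (hLip : ∀ a ∈ Set.Icc (0:ℝ) 3, ∀ b ∈ Set.Icc (0:ℝ) 3, |f b - f a| ≤ L * |b - a|)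
    (hB : |f 0 - f 2| ≤ B)
    (hf2 : 0 < f 2)
    (hn : 1 ≤ n)
    (hε0 : 0 ≤ ε) (hε1 : 4 * ε ≤ 1)
    (x : Fin n → Fin p → ℝ)
    (hx : ∀ i j : Fin n, |(∑ k, x i k * x j k) - (if i = j then 1 else 0)| ≤ ε)
    (hsmall : B / n + 4 * L * ε ≤ f 2 / 2) :
    opNorm ((Matrix.diagonal fun i => ((n : ℝ)⁻¹ * ∑ j, affinity f x i j)⁻¹) -
        (f 2)⁻¹ • (1 : Matrix (Fin n) (Fin n) ℝ))
      ≤ 2 / (f 2) ^ 2 * (B / n + 4 * L * ε) := by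
  have hnR : (0:ℝ) < n := by exact_mod_cast hn
  have hB0 : 0 ≤ B := le_trans (abs_nonneg _) hB
  set δ : ℝ := B / n + 4 * L * ε with hδ
  have hδ0 : 0 ≤ δ := by rw [hδ]; positivity
  clear_value δ
  set d : Fin n → ℝ := fun i => (n : ℝ)⁻¹ * ∑ j, affinity f x i j with hd
  clear_value d
  have haff : ∀ i j : Fin n, |affinity f x i j - f 2| ≤
      (if j = i then B else 0) + 4 * L * ε := by
    intro i j
    by_cases hij : j = i
    · subst hij
      have h0 : (∑ k, (x j k - x j k) ^ 2) = 0 := by simp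
      rw [if_pos rfl]
      have : affinity f x j j = f 0 := by simp [affinity, h0]
      rw [this]
      have : (0:ℝ) ≤ 4 * L * ε := by positivity
      linarith [hB]
    · rw [if_neg hij]
      have hexp : (∑ k, (x i k - x j k) ^ 2)
          = (∑ k, x i k * x i k) + (∑ k, x j k * x j k) - 2 * ∑ k, x i k * x j k := by
        rw [Finset.mul_sum, ← Finset.sum_add_distrib, ← Finset.sum_sub_distrib]
        exact Finset.sum_congr rfl fun k _ => by ring
      set t : ℝ := ∑ k, (x i k - x j k) ^ 2 with ht
      have hii := hx i i
      have hjj := hx j j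
      have hij' := hx i j
      rw [if_pos rfl] at hii hjj
      rw [if_neg (show ¬ i = j from fun h => hij h.symm)] at hij'
      have habs : |t - 2| ≤ 4 * ε := by
        rw [hexp]
        calc |(∑ k, x i k * x i k) + (∑ k, x j k * x j k) - 2 * (∑ k, x i k * x j k) - 2|
            = |((∑ k, x i k * x i k) - 1) + ((∑ k, x j k * x j k) - 1)
                + (-2) * ((∑ k, x i k * x j k) - 0)| := by congr 1; ring
          _ ≤ |((∑ k, x i k * x i k) - 1) + ((∑ k, x j k * x j k) - 1)|
                + |(-2) * ((∑ k, x i k * x j k) - 0)| := abs_add_le _ _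
          _ ≤ (|(∑ k, x i k * x i k) - 1| + |(∑ k, x j k * x j k) - 1|)
                + 2 * |(∑ k, x i k * x j k) - 0| := by
                rw [abs_mul]
                have := abs_add_le ((∑ k, x i k * x i k) - 1) ((∑ k, x j k * x j k) - 1)
                have h2 : |(-2:ℝ)| = 2 := by norm_num
                rw [h2]
                linarith
          _ ≤ 4 * ε := by linarith
      have ht0 : 0 ≤ t := Finset.sum_nonneg fun k _ => sq_nonneg _
      have ht3 : t ≤ 3 := by
        have := abs_le.mp habs
        linarith
      have haff_eq : affinity f x i j = f t := rfl
      rw [haff_eq, zero_add]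
      calc |f t - f 2| ≤ L * |t - 2| :=
            hLip 2 ⟨by norm_num, by norm_num⟩ t ⟨ht0, ht3⟩
        _ ≤ L * (4 * ε) := mul_le_mul_of_nonneg_left habs hL0
        _ = 4 * L * ε := by ring
  have hdi : ∀ i, |d i - f 2| ≤ δ := by
    intro i
    have hsum : |(∑ j, affinity f x i j) - n * f 2| ≤ B + n * (4 * L * ε) := by
      have h1 : (∑ j, affinity f x i j) - (n:ℝ) * f 2 = ∑ j, (affinity f x i j - f 2) := by
        rw [Finset.sum_sub_distrib]
        simp [Finset.card_univ, mul_comm]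
      rw [h1]
      calc |∑ j, (affinity f x i j - f 2)| ≤ ∑ j, |affinity f x i j - f 2| :=
            Finset.abs_sum_le_sum_abs _ _
        _ ≤ ∑ j : Fin n, ((if j = i then B else 0) + 4 * L * ε) :=
            Finset.sum_le_sum fun j _ => haff i j
        _ = B + n * (4 * L * ε) := by
            rw [Finset.sum_add_distrib, Finset.sum_ite_eq' Finset.univ i (fun _ => B)]
            simp [Finset.card_univ, mul_comm]
    have heq : d i - f 2 = (n:ℝ)⁻¹ * ((∑ j, affinity f x i j) - n * f 2) := by
      simp only [hd]
      rw [mul_sub, ← mul_assoc, inv_mul_cancel₀ hnR.ne', one_mul]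
    rw [heq, abs_mul, abs_inv, abs_of_pos hnR]
    rw [hδ]
    have h2 : (n:ℝ)⁻¹ * |(∑ j, affinity f x i j) - n * f 2|
        ≤ (n:ℝ)⁻¹ * (B + n * (4 * L * ε)) :=
      mul_le_mul_of_nonneg_left hsum (by positivity)
    calc (n:ℝ)⁻¹ * |(∑ j, affinity f x i j) - ↑n * f 2|
        ≤ (n:ℝ)⁻¹ * (B + n * (4 * L * ε)) := h2
      _ = B / n + 4 * L * ε := by field_simp
  have hdlow : ∀ i, f 2 / 2 ≤ d i := by
    intro i
    obtain ⟨h1, h2⟩ := abs_le.mp (hdi i)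
    linarith
  have hdpos : ∀ i, 0 < d i := fun i => lt_of_lt_of_le (by linarith) (hdlow i)
  have hinv : ∀ i, |(d i)⁻¹ - (f 2)⁻¹| ≤ 2 / (f 2) ^ 2 * δ := by
    intro i
    have hne : d i ≠ 0 := (hdpos i).ne'
    have hf2ne : f 2 ≠ 0 := hf2.ne'
    have heq : (d i)⁻¹ - (f 2)⁻¹ = (f 2 - d i) * (d i * f 2)⁻¹ := by
      field_simp
    rw [heq, abs_mul, abs_inv, abs_of_pos (mul_pos (hdpos i) hf2)]
    have h1 : |f 2 - d i| ≤ δ := by rw [abs_sub_comm]; exact hdi i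
    have h2 : (d i * f 2)⁻¹ ≤ (f 2 / 2 * f 2)⁻¹ := by
      apply inv_anti₀ (by positivity)
      exact mul_le_mul_of_nonneg_right (hdlow i) hf2.le
    have h3 : (f 2 / 2 * f 2)⁻¹ = 2 / (f 2) ^ 2 := by
      field_simp
    calc |f 2 - d i| * (d i * f 2)⁻¹ ≤ δ * (f 2 / 2 * f 2)⁻¹ :=
          mul_le_mul h1 h2 (inv_nonneg.mpr (mul_pos (hdpos i) hf2).le) hδ0
      _ = 2 / (f 2) ^ 2 * δ := by rw [h3]; ring
  rw [diag_sub_smul']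
  have hinv' : ∀ i : Fin n, |((n : ℝ)⁻¹ * ∑ j, affinity f x i j)⁻¹ - (f 2)⁻¹|
      ≤ 2 / (f 2) ^ 2 * δ := by
    intro i
    have := hinv i
    rw [hd] at this
    exact this
  exact opNorm_diagonal_le' _ (by positivity) hinv'

lemma per_sample (γ0 C1 : ℝ) (hγ0 : 0 < γ0) (hC1 : 0 < C1)
    (f : ℝ → ℝ) (L B : ℝ) (hL0 : 0 ≤ L)
    (hLip : ∀ a ∈ Set.Icc (0:ℝ) 3, ∀ b ∈ Set.Icc (0:ℝ) 3, |f b - f a| ≤ L * |b - a|)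
    (hB : |f 0 - f 2| ≤ B) (hB0 : 0 ≤ B) (hf2 : 0 < f 2)
    (n p : ℕ) (hn3 : 3 ≤ n) (hγn : γ0⁻¹ ≤ (n:ℝ))
    (hp : γ0 ≤ (p:ℝ)/n ∧ (p:ℝ)/n ≤ γ0⁻¹)
    (hEm : Real.log n / Real.sqrt n <
      min (1/(4*Real.sqrt (2*C1/γ0)+1))
        ((f 2/2)/(B+4*L*Real.sqrt (2*C1/γ0)+1)))
    (x : Fin n → Fin p → ℝ)
    (hx : ∀ i j : Fin n, |(∑ k, x i k * x j k) - (if i = j then 1 else 0)| ≤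
      Real.sqrt (C1 * Real.log p / p)) :
    opNorm ((Matrix.diagonal fun i => ((n:ℝ)⁻¹ * ∑ j, affinity f x i j)⁻¹) -
        (f 2)⁻¹ • (1 : Matrix (Fin n) (Fin n) ℝ))
      ≤ (2/(f 2)^2*(B + 4*L*Real.sqrt (2*C1/γ0)) + 1) * (Real.log n / Real.sqrt n) := by
  set K : ℝ := Real.sqrt (2*C1/γ0) with hK
  set E : ℝ := Real.log n / Real.sqrt n with hE
  set ε : ℝ := Real.sqrt (C1 * Real.log p / p) with hεdef
  have hK0 : 0 ≤ K := Real.sqrt_nonneg _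
  have hLK0 : 0 ≤ L * K := mul_nonneg hL0 hK0
  have hnR : (3:ℝ) ≤ n := by exact_mod_cast hn3
  have hn0 : (0:ℝ) < n := by linarith
  have hlogn1 : 1 ≤ Real.log n := by
    rw [Real.le_log_iff_exp_le hn0]
    calc Real.exp 1 ≤ 2.7182818286 := le_of_lt Real.exp_one_lt_d9
      _ ≤ 3 := by norm_num
      _ ≤ n := hnR
  have hsqrtn_pos : 0 < Real.sqrt n := Real.sqrt_pos.mpr hn0
  have hE0 : 0 ≤ E := div_nonneg (by linarith) (Real.sqrt_nonneg _)
  have hplow : γ0 * n ≤ (p:ℝ) := by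
    have := hp.1
    rw [le_div_iff₀ hn0] at this
    linarith
  have hppos : (0:ℝ) < p := lt_of_lt_of_le (mul_pos hγ0 hn0) hplow
  have hphigh : (p:ℝ) ≤ γ0⁻¹ * n := by
    have := hp.2
    rw [div_le_iff₀ hn0] at this
    linarith
  have hpn2 : (p:ℝ) ≤ (n:ℝ)^2 := by
    calc (p:ℝ) ≤ γ0⁻¹ * n := hphigh
      _ ≤ (n:ℝ) * n := mul_le_mul_of_nonneg_right hγn hn0.le
      _ = (n:ℝ)^2 := by ring
  have hp1 : (1:ℝ) ≤ p := by
    have : 0 < p := by exact_mod_cast hppos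
    exact_mod_cast this
  have hlogp0 : 0 ≤ Real.log p := Real.log_nonneg hp1
  have hlogp : Real.log p ≤ 2 * Real.log n := by
    calc Real.log p ≤ Real.log ((n:ℝ)^2) :=
          (Real.log_le_log_iff hppos (by positivity)).mpr hpn2
      _ = 2 * Real.log n := by
          rw [show ((n:ℝ)^2) = (n:ℝ)^(2:ℕ) by norm_num, Real.log_pow]
          norm_num
  have hKE0 : 0 ≤ K * E := mul_nonneg hK0 hE0
  have hεK : ε ≤ K * E := by
    rw [hεdef, Real.sqrt_le_left hKE0]
    have hKE2 : (K*E)^2 = (2*C1/γ0) * ((Real.log n)^2 / n) := by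
      rw [mul_pow, hK, Real.sq_sqrt (by positivity), hE, div_pow, Real.sq_sqrt hn0.le]
    rw [hKE2]
    have hq0 : (0:ℝ) < 2*C1/γ0 := by positivity
    calc C1 * Real.log p / p ≤ (C1 * (2*Real.log n)) / (γ0 * n) := by
          apply div_le_div₀ (by positivity)
            (mul_le_mul_of_nonneg_left hlogp hC1.le) (by positivity) hplow
      _ = (2*C1/γ0) * (Real.log n / n) := by field_simp
      _ ≤ (2*C1/γ0) * ((Real.log n)^2 / n) := by
          apply mul_le_mul_of_nonneg_left _ hq0.le
          have hle : Real.log n ≤ (Real.log n)^2 := by nlinarith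
          exact (div_le_div_iff_of_pos_right hn0).mpr hle
  have hε0 : 0 ≤ ε := Real.sqrt_nonneg _
  have hEm1 : E < 1/(4*K+1) := lt_of_lt_of_le hEm (min_le_left _ _)
  have hEm2 : E < (f 2/2)/(B+4*L*K+1) := lt_of_lt_of_le hEm (min_le_right _ _)
  have hε1 : 4 * ε ≤ 1 := by
    have h4K1 : (0:ℝ) < 4*K+1 := by linarith
    have t1 : 4*ε ≤ 4*(K*E) := by linarith
    have t2 : 4*(K*E) ≤ 4*(K*(1/(4*K+1))) := by
      apply mul_le_mul_of_nonneg_left _ (by norm_num)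
      exact mul_le_mul_of_nonneg_left hEm1.le hK0
    have t3 : 4*(K*(1/(4*K+1))) ≤ 1 := by
      rw [show 4*(K*(1/(4*K+1))) = 4*K/(4*K+1) by ring, div_le_one h4K1]
      linarith
    linarith
  have hc : 0 < B + 4*L*K + 1 := by linarith
  have h1n : 1/(n:ℝ) ≤ E := by
    have hsn : Real.sqrt n ≤ n := by
      rw [Real.sqrt_le_left hn0.le]
      nlinarith
    calc 1/(n:ℝ) ≤ 1/Real.sqrt n := one_div_le_one_div_of_le hsqrtn_pos hsn
      _ ≤ Real.log n/Real.sqrt n := (div_le_div_iff_of_pos_right hsqrtn_pos).mpr hlogn1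
  have hsum : B/(n:ℝ) + 4*L*ε ≤ E*(B + 4*L*K) := by
    have t1 : B/(n:ℝ) ≤ B*E := by
      rw [div_eq_mul_one_div]
      exact mul_le_mul_of_nonneg_left h1n hB0
    have t2 : 4*L*ε ≤ 4*L*(K*E) := mul_le_mul_of_nonneg_left hεK (by linarith)
    have hring : E*(B + 4*L*K) = B*E + 4*L*(K*E) := by ring
    linarith
  have hsmall : B/(n:ℝ) + 4*L*ε ≤ f 2/2 := by
    have h2 : E*(B+4*L*K) ≤ E*(B+4*L*K+1) := mul_le_mul_of_nonneg_left (by linarith) hE0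
    have h3 : E*(B+4*L*K+1) ≤ f 2/2 := by
      rw [← le_div_iff₀ hc]
      exact hEm2.le
    linarith
  have hmain := key_bound f hL0 hLip hB hf2 (by omega : 1 ≤ n) hε0 hε1 x hx hsmall
  calc opNorm ((Matrix.diagonal fun i => ((n:ℝ)⁻¹ * ∑ j, affinity f x i j)⁻¹) -
        (f 2)⁻¹ • (1 : Matrix (Fin n) (Fin n) ℝ))
      ≤ 2 / (f 2)^2 * (B/n + 4*L*ε) := hmain
    _ ≤ 2/(f 2)^2 * (E*(B+4*L*K)) := mul_le_mul_of_nonneg_left hsum (by positivity)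
    _ = (2/(f 2)^2 * (B+4*L*K)) * E := by ring
    _ ≤ (2/(f 2)^2 * (B+4*L*K) + 1) * E :=
        mul_le_mul_of_nonneg_right (by linarith) hE0

end Helpers

theorem degree_matrix_concentration
    (γ0 : ℝ) (hγ0 : 0 < γ0) (hγ1 : γ0 ≤ 1)
    (p1 p2 : ℕ → ℕ)
    (hp1 : ∀ n : ℕ, 1 ≤ n → γ0 ≤ (p1 n : ℝ) / n ∧ (p1 n : ℝ) / n ≤ γ0⁻¹)
    (hp2 : ∀ n : ℕ, 1 ≤ n → γ0 ≤ (p2 n : ℝ) / n ∧ (p2 n : ℝ) / n ≤ γ0⁻¹)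
    (Ω : ℕ → Type) [∀ n, MeasurableSpace (Ω n)]
    (P : ∀ n, Measure (Ω n)) (hP : ∀ n, IsProbabilityMeasure (P n))
    (X : ∀ n, Ω n → Fin n → Fin (p1 n) → ℝ)
    (Y : ∀ n, Ω n → Fin n → Fin (p2 n) → ℝ)
    (hXY : ∀ n, (P n).map (fun ω => (X n ω, Y n ω)) =
      (gaussPi n (p1 n)).prod (gaussPi n (p2 n)))
    (f : ℝ → ℝ) (hdec : ∀ a b : ℝ, 0 ≤ a → a ≤ b → f b ≤ f a)
    (hsmooth : ContDiff ℝ 2 f)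
    (hς : 0 < varsigma f) (hf2 : 0 < f 2) :
    ∀ C1 : ℝ, 0 < C1 → ∃ C : ℝ, 0 < C ∧
    ∀ᶠ n : ℕ in atTop, ∀ ω : Ω n,
      (∀ i j : Fin n,
        |(∑ k, X n ω i k * X n ω j k) - (if i = j then 1 else 0)| ≤
          Real.sqrt (C1 * Real.log (p1 n) / (p1 n))) →
      (∀ i j : Fin n,
        |(∑ k, Y n ω i k * Y n ω j k) - (if i = j then 1 else 0)| ≤
          Real.sqrt (C1 * Real.log (p2 n) / (p2 n))) →
      opNorm ((Matrix.diagonal fun i => ((n : ℝ)⁻¹ * ∑ j, affinity f (X n ω) i j)⁻¹) -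
          (f 2)⁻¹ • (1 : Matrix (Fin n) (Fin n) ℝ)) ≤ C * Real.log n / Real.sqrt n ∧
      opNorm ((Matrix.diagonal fun i => ((n : ℝ)⁻¹ * ∑ j, affinity f (Y n ω) i j)⁻¹) -
          (f 2)⁻¹ • (1 : Matrix (Fin n) (Fin n) ℝ)) ≤ C * Real.log n / Real.sqrt n := by
  intro C1 hC1
  have hdiff : ∀ t ∈ Set.Icc (0:ℝ) 3, DifferentiableAt ℝ f t :=
    fun t _ => (hsmooth.differentiable two_ne_zero).differentiableAt
  obtain ⟨L, hLb⟩ := (isCompact_Icc : IsCompact (Set.Icc (0:ℝ) 3)).exists_bound_of_continuousOn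
    ((hsmooth.continuous_deriv one_le_two).continuousOn)
  have hL0 : 0 ≤ L := le_trans (norm_nonneg _) (hLb 0 ⟨le_refl 0, by norm_num⟩)
  have hLip : ∀ a ∈ Set.Icc (0:ℝ) 3, ∀ b ∈ Set.Icc (0:ℝ) 3, |f b - f a| ≤ L * |b - a| := by
    intro a ha b hb
    have := Convex.norm_image_sub_le_of_norm_deriv_le hdiff hLb (convex_Icc 0 3) ha hb
    simpa [Real.norm_eq_abs] using this
  set B : ℝ := |f 0 - f 2| with hBdef
  have hB0 : 0 ≤ B := abs_nonneg _
  set K : ℝ := Real.sqrt (2*C1/γ0) with hKdef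
  have hK0 : 0 ≤ K := Real.sqrt_nonneg _
  have hLK0 : 0 ≤ L * K := mul_nonneg hL0 hK0
  refine ⟨2/(f 2)^2*(B + 4*L*K) + 1, ?_, ?_⟩
  · have h1 : 0 ≤ 2/(f 2)^2*(B + 4*L*K) := mul_nonneg (by positivity) (by linarith)
    linarith
  · set m : ℝ := min (1/(4*K+1)) ((f 2/2)/(B+4*L*K+1)) with hm
    have hc : 0 < B + 4*L*K + 1 := by linarith
    have hmpos : 0 < m := lt_min (by positivity) (div_pos (half_pos hf2) hc)
    have hT : Tendsto (fun n : ℕ => Real.log n / Real.sqrt n) atTop (𝓝 0) := by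
      have h1 : Tendsto (fun x : ℝ => Real.log x / x ^ ((1:ℝ)/2)) atTop (𝓝 0) :=
        (isLittleO_log_rpow_atTop (by norm_num : (0:ℝ) < 1/2)).tendsto_div_nhds_zero
      have h2 : Tendsto (fun x : ℝ => Real.log x / Real.sqrt x) atTop (𝓝 0) := by
        refine h1.congr' ?_
        filter_upwards [eventually_ge_atTop (0:ℝ)] with x hx
        rw [Real.sqrt_eq_rpow]
      exact h2.comp tendsto_natCast_atTop_atTop
    filter_upwards [eventually_ge_atTop 3,
      tendsto_natCast_atTop_atTop.eventually_ge_atTop γ0⁻¹,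
      hT.eventually (eventually_lt_nhds hmpos)] with n hn3 hγn hEm
    intro ω hX hY
    have hn1 : 1 ≤ n := by omega
    constructor
    · have := per_sample γ0 C1 hγ0 hC1 f L B hL0 hLip (le_refl B) hB0 hf2 n (p1 n)
        hn3 hγn (hp1 n hn1) hEm (X n ω) hX
      calc opNorm _ ≤ (2/(f 2)^2*(B + 4*L*K) + 1) * (Real.log n / Real.sqrt n) := this
        _ = (2/(f 2)^2*(B + 4*L*K) + 1) * Real.log n / Real.sqrt n := by
            rw [mul_div_assoc]
    · have := per_sample γ0 C1 hγ0 hC1 f L B hL0 hLip (le_refl B) hB0 hf2 n (p2 n)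
        hn3 hγn (hp2 n hn1) hEm (Y n ω) hY
      calc opNorm _ ≤ (2/(f 2)^2*(B + 4*L*K) + 1) * (Real.log n / Real.sqrt n) := this
        _ = (2/(f 2)^2*(B + 4*L*K) + 1) * Real.log n / Real.sqrt n := by
            rw [mul_div_assoc]


end SensorFusion
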